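/- For all (ℓ,m) ∈ I with m > 1, all η, δ ∈ (0,1), and all x, x* ∈ (0,1) satisfying x* ≥ (1−η²)^{−1/2} x̄_{ℓ,m}, x > x*, and x² ≥ (1−δ)^{−1} x*², where x̄_{ℓ,m} = ((ℓ²−m²+3/4)/(ℓ²−1/4))^{1/2}, one has |Y_{ℓ,m}(x)| ≤ |Y_{ℓ,m}(x*)| · (1−x²)^{δ(η(ℓ²−1/4)^{1/2} − 1)/2}. -/

import Mathlib

open Real Set

/-- Jacobi polynomial `P_j^{(α,α)}` via Rodrigues' formula. -/
noncomputable def jacobiP (j : ℕ) (α : ℝ) (x : ℝ) : ℝ :=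
  ((-1 : ℝ) ^ j / (2 ^ j * (Nat.factorial j : ℝ))) * (1 - x ^ 2) ^ (-α) *
    iteratedDeriv j (fun t : ℝ => (1 - t ^ 2) ^ (α + (j : ℝ))) x

/-- The normalization constant `c_{ℓm}`. -/
noncomputable def cConst (ℓ m : ℝ) : ℝ :=
  Real.sqrt (ℓ * Real.Gamma (ℓ - m + 1/2) * Real.Gamma (ℓ + m + 1/2)) /
    ((2 : ℝ) ^ m * Real.Gamma (ℓ + 1/2))

/-- The function `Y_{ℓ,m}`. -/
noncomputable def Yfun (ℓ m x : ℝ) : ℝ :=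
  cConst ℓ m * (1 - x ^ 2) ^ (m / 2) * jacobiP ⌊ℓ - m - 1/2⌋₊ m x

/-- Membership in the index set `I = {(ℓ,m) ∈ (ℕ/2)² : ℓ - m - 1/2 ∈ ℕ}`. -/
def memI (ℓ m : ℝ) : Prop :=
  (∃ n : ℕ, m = (n : ℝ) / 2) ∧ (∃ j : ℕ, ℓ - m - 1/2 = (j : ℝ))

/-- `b_{ℓ,m} = m / ℓ`. -/
noncomputable def bPt (ℓ m : ℝ) : ℝ := m / ℓ

/-- `a_{ℓ,m} = (1 - b_{ℓ,m}²)^{1/2}`. -/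
noncomputable def aPt (ℓ m : ℝ) : ℝ := Real.sqrt (1 - bPt ℓ m ^ 2)

/-- Membership in `ℕ_k = ℕ + (k-1)/2`. -/
def memNk (k : ℕ) (t : ℝ) : Prop := ∃ n : ℕ, t = (n : ℝ) + ((k : ℝ) - 1) / 2

/-- Membership in `I_d`. -/
def memId (d : ℕ) (ℓ m : ℝ) : Prop := memNk d ℓ ∧ memNk (d - 1) m ∧ m ≤ ℓ

/-- The function `X̃^d_{ℓ,m}`. -/
noncomputable def Xtilde (d : ℕ) (ℓ m x : ℝ) : ℝ :=
  (1 - x ^ 2) ^ (-((d : ℝ) - 2) / 4) * Yfun ℓ m x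

/-- The turning point `x̄_{ℓ,m}`. -/
noncomputable def xbar (ℓ m : ℝ) : ℝ :=
  Real.sqrt ((ℓ ^ 2 - m ^ 2 + 3/4) / (ℓ ^ 2 - 1/4))

open Polynomial

/-- Auxiliary polynomial sequence from iterated derivatives of `(1-t²)^β`. -/
noncomputable def Qp (β : ℝ) : ℕ → Polynomial ℝ
  | 0 => 1
  | (k+1) => Polynomial.C (-2*(β - k)) * Polynomial.X * Qp β k
      + (1 - Polynomial.X^2) * Polynomial.derivative (Qp β k)

set_option maxHeartbeats 1000000 in
lemma Qp_identity (β : ℝ) (k : ℕ) :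
    Qp β (k+2) + Polynomial.C (2*(β-(k:ℝ)-1)) * Polynomial.X * Qp β (k+1)
      + Polynomial.C (((k:ℝ)+1)*(2*β-(k:ℝ))) * (1 - Polynomial.X^2) * Qp β k = 0 := by
  induction k with
  | zero =>
      simp only [Qp]
      simp only [derivative_add, derivative_mul, derivative_C, derivative_X, derivative_one,
        derivative_pow, derivative_sub, derivative_zero]
      push_cast
      simp only [map_sub, map_add, map_mul, map_neg, map_ofNat, map_one, map_zero]
      ring
  | succ k ih =>
      have ih' := congrArg Polynomial.derivative ih
      simp only [derivative_add, derivative_mul, derivative_C, derivative_X, derivative_one,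
        derivative_sub, derivative_pow, derivative_zero] at ih'
      show Qp β (k+3) + _ + _ = 0
      have e3 : Qp β (k+3) = Polynomial.C (-2*(β - (k+2:ℕ))) * Polynomial.X * Qp β (k+2)
          + (1 - Polynomial.X^2) * Polynomial.derivative (Qp β (k+2)) := rfl
      have e2 : Qp β (k+2) = Polynomial.C (-2*(β - (k+1:ℕ))) * Polynomial.X * Qp β (k+1)
          + (1 - Polynomial.X^2) * Polynomial.derivative (Qp β (k+1)) := rfl
      have e1 : Qp β (k+1) = Polynomial.C (-2*(β - (k:ℕ))) * Polynomial.X * Qp β k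
          + (1 - Polynomial.X^2) * Polynomial.derivative (Qp β k) := rfl
      rw [e2, e1] at ih
      rw [e2, e1] at ih'
      rw [e3, e2, e1]
      push_cast at ih ih' ⊢
      simp only [derivative_add, derivative_mul, derivative_C, derivative_X, derivative_one,
        derivative_sub, derivative_pow, derivative_zero, derivative_ofNat, derivative_natCast,
        map_sub, map_add, map_mul, map_neg, map_ofNat, map_one, map_zero] at ih ih' ⊢
      linear_combination ((-2) * (Polynomial.C β - Polynomial.C (k:ℝ) - 1) * Polynomial.X) * ih
        + (1 - Polynomial.X^2) * ih'

lemma Qp_deriv_succ (β : ℝ) (j : ℕ) :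
    Polynomial.derivative (Qp β (j+1))
      = Polynomial.C (-(((j:ℝ)+1)*(2*β-(j:ℝ)))) * Qp β j := by
  have h := Qp_identity β j
  have e2 : Qp β (j+2) = Polynomial.C (-2*(β - (j+1:ℕ))) * Polynomial.X * Qp β (j+1)
      + (1 - Polynomial.X^2) * Polynomial.derivative (Qp β (j+1)) := rfl
  rw [e2] at h
  push_cast at h
  have h2 : (1 - Polynomial.X^2) * (Polynomial.derivative (Qp β (j+1))
      - Polynomial.C (-(((j:ℝ)+1)*(2*β-(j:ℝ)))) * Qp β j) = 0 := by
    simp only [map_sub, map_add, map_mul, map_neg, map_ofNat, map_one, map_zero] at h ⊢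
    linear_combination h
  rcases mul_eq_zero.mp h2 with h3 | h3
  · exfalso
    have := congrArg (Polynomial.eval 0) h3
    simp at this
  · exact sub_eq_zero.mp h3

lemma iter_formula (β : ℝ) (k : ℕ) :
    ∀ t ∈ Set.Ioo (-1:ℝ) 1, iteratedDeriv k (fun s : ℝ => (1 - s^2) ^ β) t
      = (1 - t^2) ^ (β - k) * (Qp β k).eval t := by
  induction k with
  | zero => intro t ht; simp [Qp]
  | succ k ih =>
      intro t ht
      have ht2 : (0:ℝ) < 1 - t^2 := by
        nlinarith [ht.1, ht.2]
      have hev : iteratedDeriv k (fun s : ℝ => (1 - s^2) ^ β)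
          =ᶠ[nhds t] (fun s => (1 - s^2) ^ (β - k) * (Qp β k).eval s) :=
        Filter.eventually_of_mem (isOpen_Ioo.mem_nhds ht) ih
      rw [iteratedDeriv_succ, hev.deriv_eq]
      have h1 : HasDerivAt (fun s : ℝ => 1 - s^2) (-(2*t)) t := by
        simpa using ((hasDerivAt_pow 2 t).const_sub 1)
      have h2 : HasDerivAt (fun s : ℝ => (1 - s^2) ^ (β - k))
          (-(2*t) * (β - k) * (1 - t^2) ^ (β - k - 1)) t :=
        h1.rpow_const (Or.inl (ne_of_gt ht2))
      have h3 : HasDerivAt (fun s : ℝ => (Qp β k).eval s)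
          ((Polynomial.derivative (Qp β k)).eval t) t := (Qp β k).hasDerivAt t
      have h4 : HasDerivAt (fun s : ℝ => (1 - s^2) ^ (β - k) * (Qp β k).eval s) _ t := h2.mul h3
      rw [h4.deriv]
      have hsplit : (1 - t^2) ^ (β - k) = (1 - t^2) ^ (β - (k+1:ℕ)) * (1 - t^2) := by
        rw [← Real.rpow_add_one (ne_of_gt ht2)]
        push_cast
        ring_nf
      rw [hsplit]
      have : (Qp β (k+1)).eval t = (-2*(β - k)) * t * (Qp β k).eval t
          + (1 - t^2) * (Polynomial.derivative (Qp β k)).eval t := by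
        show (Polynomial.C (-2*(β - (k:ℕ))) * Polynomial.X * Qp β k
          + (1 - Polynomial.X^2) * Polynomial.derivative (Qp β k)).eval t = _
        simp [Polynomial.eval_mul, Polynomial.eval_add]
      rw [this]
      have hpow : (1 - t^2) ^ (β - k - 1) = (1 - t^2) ^ (β - (k+1:ℕ)) := by
        push_cast; ring_nf
      rw [hpow]
      ring






open Polynomial in
lemma jacobiP_eq (j : ℕ) (α : ℝ) (x : ℝ) (hx : x ∈ Set.Ioo (-1:ℝ) 1) :
    jacobiP j α x = ((-1 : ℝ) ^ j / (2 ^ j * (Nat.factorial j : ℝ)))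
      * (Qp (α + j) j).eval x := by
  have hx2 : (0:ℝ) < 1 - x^2 := by nlinarith [hx.1, hx.2]
  unfold jacobiP
  rw [iter_formula (α + j) j x hx]
  have h1 : α + (j:ℝ) - (j:ℕ) = α := by ring
  rw [h1]
  rw [Real.rpow_neg (le_of_lt hx2)]
  field_simp [ne_of_gt (Real.rpow_pos_of_pos hx2 α)]

lemma one_sub_sq_pos {t : ℝ} (h1 : -1 < t) (h2 : t < 1) : 0 < 1 - t^2 := by nlinarith

lemma psd_aux {γ c lam η t m : ℝ} (hγ0 : 0 ≤ γ)
    (h5 : lam - lam*(1-η^2)*t^2 ≤ m^2 - 1)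
    (h6 : 0 ≤ ((c+1)^2 - γ*(γ+1)) * t^2)
    (h7 : ((c+1)^2)*t^2 = η^2*lam*t^2) :
    γ^2*t^2 + (lam-γ)*(1-t^2) ≤ m^2 := by nlinarith [h5, h6, h7, hγ0]

lemma qf_aux (u v q r : ℝ) (h : 0 ≤ (u - v^2)*q^2) :
    0 ≤ u*q^2 + 2*v*q*r + r^2 := by nlinarith [sq_nonneg (v*q + r)]

set_option maxHeartbeats 1000000 in
theorem stmt15 (ℓ m : ℝ) (hI : memI ℓ m) (hm : 1 < m) (η δ : ℝ)
    (hη : η ∈ Set.Ioo (0:ℝ) 1) (hδ : δ ∈ Set.Ioo (0:ℝ) 1)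
    (x xs : ℝ) (hx : x ∈ Set.Ioo (0:ℝ) 1) (hxs : xs ∈ Set.Ioo (0:ℝ) 1)
    (h1 : (1 - η ^ 2) ^ (-(1/2) : ℝ) * xbar ℓ m ≤ xs) (h2 : xs < x)
    (h3 : (1 - δ)⁻¹ * xs ^ 2 ≤ x ^ 2) :
    |Yfun ℓ m x| ≤ |Yfun ℓ m xs| *
      (1 - x ^ 2) ^ (δ * (η * Real.sqrt (ℓ ^ 2 - 1/4) - 1) / 2) := by
  obtain ⟨hη0, hη1⟩ := hη
  obtain ⟨hδ0, hδ1⟩ := hδ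
  obtain ⟨hx0, hx1⟩ := hx
  obtain ⟨hxs0, hxs1⟩ := hxs
  obtain ⟨-, j, hj⟩ := hI
  have hℓ : ℓ = m + 1/2 + j := by linarith
  have hm0 : (0:ℝ) < m := by linarith
  have hj0 : (0:ℝ) ≤ (j:ℝ) := Nat.cast_nonneg j
  obtain ⟨lam, hlam_def⟩ : ∃ lam : ℝ, lam = ℓ^2 - 1/4 := ⟨_, rfl⟩
  have hlam : lam = (m+(j:ℝ))*(m+(j:ℝ)+1) := by rw [hlam_def, hℓ]; ring
  have hlam_pos : 0 < lam := by rw [hlam]; nlinarith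
  obtain ⟨s, hs_def⟩ : ∃ s : ℝ, s = Real.sqrt (ℓ^2 - 1/4) := ⟨_, rfl⟩
  have hs_sq : s^2 = lam := by rw [hs_def, ← hlam_def] at *; exact Real.sq_sqrt (le_of_lt hlam_pos)
  have hs_pos : 0 < s := by rw [hs_def, ← hlam_def] at *; exact Real.sqrt_pos.mpr hlam_pos
  obtain ⟨c, hc_def⟩ : ∃ c : ℝ, c = η * s - 1 := ⟨_, rfl⟩
  have hc1 : c + 1 = η * s := by rw [hc_def]; ring
  have hcp : 0 < c + 1 := by rw [hc1]; exact mul_pos hη0 hs_pos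
  have hc1sq : (c+1)^2 = η^2 * lam := by rw [hc1, mul_pow, hs_sq]
  obtain ⟨γ, hγ_def⟩ : ∃ γ : ℝ, γ = max c 0 := ⟨_, rfl⟩
  have hγ0 : 0 ≤ γ := hγ_def ▸ le_max_right c 0
  have hγc : c ≤ γ := hγ_def ▸ le_max_left c 0
  have hγγ : γ*(γ+1) ≤ (c+1)^2 := by
    subst hγ_def
    rcases le_or_gt c 0 with h | h
    · rw [max_eq_right h]; nlinarith [sq_nonneg (c+1)]
    · rw [max_eq_left (le_of_lt h)]; nlinarith
  have hA' : 0 < 1 - η^2 := by nlinarith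
  have hxbar_sq : xbar ℓ m ^ 2 = (lam - m^2 + 1)/lam := by
    have hnum : ℓ^2 - m^2 + 3/4 = lam - m^2 + 1 := by rw [hlam_def]; ring
    have hden : ℓ^2 - (1:ℝ)/4 = lam := hlam_def.symm
    have hnonneg : (0:ℝ) ≤ (ℓ ^ 2 - m ^ 2 + 3 / 4) / (ℓ ^ 2 - 1 / 4) := by
      rw [hnum, hden]
      apply div_nonneg _ (le_of_lt hlam_pos)
      rw [hlam]; nlinarith
    simp only [xbar]
    rw [Real.sq_sqrt hnonneg, hnum, hden]
  have key1 : lam - lam*(1-η^2)*xs^2 ≤ m^2 - 1 := by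
    have hsqA : 0 < Real.sqrt (1-η^2) := Real.sqrt_pos.mpr hA'
    have hrw : (1 - η ^ 2) ^ (-(1/2) : ℝ) = (Real.sqrt (1-η^2))⁻¹ := by
      rw [Real.rpow_neg (le_of_lt hA'), Real.sqrt_eq_rpow]
    rw [hrw] at h1
    have hbar_le : xbar ℓ m ≤ xs * Real.sqrt (1-η^2) := by
      rw [inv_mul_le_iff₀ hsqA] at h1; linarith [h1]
    have hsq : xbar ℓ m ^ 2 ≤ (xs * Real.sqrt (1-η^2))^2 :=
      pow_le_pow_left₀ (by simp only [xbar]; exact Real.sqrt_nonneg _) hbar_le 2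
    rw [hxbar_sq, mul_pow, Real.sq_sqrt (le_of_lt hA')] at hsq
    rw [div_le_iff₀ hlam_pos] at hsq
    nlinarith
  -- representation of Yfun via the polynomial Pq
  have hjfloor : ⌊ℓ - m - 1/2⌋₊ = j := by rw [hj, Nat.floor_natCast]
  obtain ⟨κ, hκ_def⟩ : ∃ κ : ℝ, κ = cConst ℓ m * ((-1:ℝ)^j / (2^j * (Nat.factorial j : ℝ))) :=
    ⟨_, rfl⟩
  obtain ⟨Pq, hPq_def⟩ : ∃ P : Polynomial ℝ, P = Qp (m + (j:ℝ)) j := ⟨_, rfl⟩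
  have hY : ∀ t : ℝ, t ∈ Set.Ioo (-1:ℝ) 1 →
      Yfun ℓ m t = κ * (1-t^2)^(m/2) * Pq.eval t := by
    intro t ht
    rw [Yfun, hjfloor, jacobiP_eq j m t ht, hκ_def, hPq_def]
    ring
  -- ODE facts
  obtain ⟨Lr, hLr_def⟩ : ∃ L : ℝ, L = ((j:ℝ)+1)*(2*m+(j:ℝ)) := ⟨_, rfl⟩
  have hlamL : lam = Lr + m^2 - m := by rw [hLr_def, hlam]; ring
  have hq2 : ∀ t : ℝ, (1-t^2) * (Polynomial.derivative (Polynomial.derivative Pq)).eval t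
      = (2*m - Lr) * Pq.eval t + (2*m+2)*t*(Polynomial.derivative Pq).eval t := by
    have e1 : Qp (m + (j:ℝ)) (j+1) = Polynomial.C (-2*((m + (j:ℝ)) - (j:ℕ))) * Polynomial.X
        * Pq + (1 - Polynomial.X^2) * Polynomial.derivative Pq := by rw [hPq_def]; rfl
    have hd := Qp_deriv_succ (m + (j:ℝ)) j
    rw [e1, ← hPq_def] at hd
    intro t
    have h0 := congrArg (Polynomial.eval t) hd
    simp only [derivative_add, derivative_mul, derivative_C, derivative_X, derivative_one,
      derivative_sub, derivative_pow, derivative_zero, Polynomial.eval_add, Polynomial.eval_mul,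
      Polynomial.eval_sub, Polynomial.eval_C, Polynomial.eval_X, Polynomial.eval_pow,
      Polynomial.eval_one, map_neg, map_mul, map_add, map_sub, map_ofNat, map_one, map_zero,
      derivative_ofNat, derivative_natCast, Polynomial.eval_zero,
      Polynomial.eval_neg, Polynomial.eval_ofNat] at h0
    rw [hLr_def]
    linear_combination h0
  -- PSD inequality
  have hPSD : ∀ t : ℝ, xs ≤ t → γ^2*t^2 + (lam-γ)*(1-t^2) ≤ m^2 := by
    intro t ht
    have hxs2 : xs^2 ≤ t^2 := pow_le_pow_left₀ hxs0.le ht 2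
    have h5 : lam - lam*(1-η^2)*t^2 ≤ m^2 - 1 := by
      have := mul_le_mul_of_nonneg_left hxs2 (le_of_lt (mul_pos hlam_pos hA'))
      linarith
    have h6 : 0 ≤ ((c+1)^2 - γ*(γ+1)) * t^2 := mul_nonneg (sub_nonneg.mpr hγγ) (sq_nonneg t)
    have h7 : ((c+1)^2)*t^2 = η^2*lam*t^2 := by rw [hc1sq]
    exact psd_aux hγ0 h5 h6 h7
  -- the auxiliary function h (eval of Hpoly) and its weighted primitive G
  obtain ⟨Hp, hHp_def⟩ : ∃ H : Polynomial ℝ, H = Polynomial.C (γ-m) * Polynomial.X * Pq^2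
      + (1 - Polynomial.X^2) * Pq * Polynomial.derivative Pq := ⟨_, rfl⟩
  have hHeval : ∀ t : ℝ, Hp.eval t = (γ-m)*t*(Pq.eval t)^2
      + (1-t^2)*(Pq.eval t)*((Polynomial.derivative Pq).eval t) := by
    intro t; rw [hHp_def]
    simp only [Polynomial.eval_add, Polynomial.eval_mul, Polynomial.eval_sub, Polynomial.eval_C,
      Polynomial.eval_X, Polynomial.eval_pow, Polynomial.eval_one]
  have hHd : ∀ t : ℝ, (Polynomial.derivative Hp).eval t = (γ-m)*(Pq.eval t)^2
      + 2*(γ-m)*t*(Pq.eval t)*((Polynomial.derivative Pq).eval t)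
      - 2*t*(Pq.eval t)*((Polynomial.derivative Pq).eval t)
      + (1-t^2)*((Polynomial.derivative Pq).eval t)^2
      + (1-t^2)*(Pq.eval t)*((Polynomial.derivative (Polynomial.derivative Pq)).eval t) := by
    intro t; rw [hHp_def]
    simp only [derivative_add, derivative_mul, derivative_C, derivative_X, derivative_one,
      derivative_sub, derivative_pow, derivative_zero, Polynomial.eval_add, Polynomial.eval_mul,
      Polynomial.eval_sub, Polynomial.eval_C, Polynomial.eval_X, Polynomial.eval_pow,
      Polynomial.eval_one, map_ofNat, map_one, map_zero, Nat.cast_ofNat,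
      derivative_ofNat, derivative_natCast, Polynomial.eval_zero, Polynomial.eval_ofNat]
    ring
  -- key pointwise inequality : p t ≥ 0
  have hp : ∀ t : ℝ, xs ≤ t → 0 ≤ -(2*m*t) * Hp.eval t
      + (1-t^2) * (Polynomial.derivative Hp).eval t := by
    intro t ht
    have hq2t := hq2 t
    have hPSDt := hPSD t ht
    have hpeq : -(2*m*t) * Hp.eval t + (1-t^2) * (Polynomial.derivative Hp).eval t
        = (m^2 - (lam-γ)*(1-t^2))*(Pq.eval t)^2
          + 2*(γ*t)*(Pq.eval t)*(-m*t*(Pq.eval t) + (1-t^2)*((Polynomial.derivative Pq).eval t))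
          + (-m*t*(Pq.eval t) + (1-t^2)*((Polynomial.derivative Pq).eval t))^2 := by
      rw [hHeval t, hHd t]
      linear_combination ((1-t^2)*(Pq.eval t))*hq2t + ((1-t^2)*(Pq.eval t)^2)*hlamL
    rw [hpeq]
    apply qf_aux
    apply mul_nonneg _ (sq_nonneg (Pq.eval t))
    have : (γ*t)^2 = γ^2*t^2 := by ring
    rw [this]
    linarith [hPSDt]
  -- G is monotone on [xs, 1]
  have hGd : ∀ t : ℝ, t ∈ Set.Ioo (-1:ℝ) 1 →
      HasDerivAt (fun u : ℝ => (1-u^2)^(m:ℝ) * Hp.eval u)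
        ((-(2*t)) * m * (1-t^2)^(m-1) * Hp.eval t
          + (1-t^2)^(m:ℝ) * (Polynomial.derivative Hp).eval t) t := by
    intro t ht
    have ht2 : (0:ℝ) < 1 - t^2 := one_sub_sq_pos ht.1 ht.2
    have h1' : HasDerivAt (fun u : ℝ => 1 - u^2) (-(2*t)) t := by
      simpa using ((hasDerivAt_pow 2 t).const_sub 1)
    exact (h1'.rpow_const (Or.inl (ne_of_gt ht2))).mul (Hp.hasDerivAt t)
  have hGmono : MonotoneOn (fun u : ℝ => (1-u^2)^(m:ℝ) * Hp.eval u) (Set.Icc xs 1) := by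
    apply monotoneOn_of_deriv_nonneg (convex_Icc _ _)
    · apply ContinuousOn.mul
      · exact ContinuousOn.rpow_const (continuous_const.sub (continuous_pow 2)).continuousOn
          (fun t _ => Or.inr hm0.le)
      · exact Hp.continuousOn
    · rw [interior_Icc]
      intro t ht
      have ht' : t ∈ Set.Ioo (-1:ℝ) 1 := ⟨by linarith [ht.1], ht.2⟩
      exact (hGd t ht').differentiableAt.differentiableWithinAt
    · rw [interior_Icc]
      intro t ht
      have ht' : t ∈ Set.Ioo (-1:ℝ) 1 := ⟨by linarith [ht.1], ht.2⟩
      have ht2 : (0:ℝ) < 1 - t^2 := one_sub_sq_pos ht'.1 ht'.2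
      rw [(hGd t ht').deriv]
      have hsplit : (1-t^2)^(m:ℝ) = (1-t^2)^(m-1)*(1-t^2) := by
        rw [← Real.rpow_add_one (ne_of_gt ht2)]; ring_nf
      rw [hsplit]
      have he : (-(2*t)) * m * (1-t^2)^(m-1) * Hp.eval t
          + (1-t^2)^(m-1)*(1-t^2) * (Polynomial.derivative Hp).eval t
          = (1-t^2)^(m-1) * (-(2*m*t) * Hp.eval t
            + (1-t^2) * (Polynomial.derivative Hp).eval t) := by ring
      rw [he]
      exact mul_nonneg (Real.rpow_nonneg ht2.le _) (hp t ht.1.le)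
  -- hence Hp.eval t ≤ 0 on [xs, x]
  have hh : ∀ t : ℝ, xs ≤ t → t ≤ x → Hp.eval t ≤ 0 := by
    intro t ht1 ht2
    have htlt1 : t < 1 := lt_of_le_of_lt ht2 hx1
    have ht2' : (0:ℝ) < 1 - t^2 := one_sub_sq_pos (by linarith) htlt1
    have hG1 : (fun u : ℝ => (1-u^2)^(m:ℝ) * Hp.eval u) 1 = 0 := by
      have : (1:ℝ) - 1^2 = 0 := by norm_num
      simp only [this, Real.zero_rpow (ne_of_gt hm0), zero_mul]
    have hGt := hGmono (Set.mem_Icc.mpr ⟨ht1, htlt1.le⟩)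
      (Set.mem_Icc.mpr ⟨by linarith, le_refl 1⟩) htlt1.le
    rw [hG1] at hGt
    have hGt' : (1-t^2)^(m:ℝ) * Hp.eval t ≤ 0 := by simpa using hGt
    have hpow := Real.rpow_pos_of_pos ht2' (m:ℝ)
    by_contra hcon
    push_neg at hcon
    have := mul_pos hpow hcon
    linarith
  -- W is antitone on [xs, x]
  have hWd : ∀ t : ℝ, t ∈ Set.Ioo (-1:ℝ) 1 →
      HasDerivAt (fun u : ℝ => (1-u^2)^(m-γ) * (Pq.eval u)^2)
        ((-(2*t)) * (m-γ) * (1-t^2)^(m-γ-1) * (Pq.eval t)^2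
          + (1-t^2)^(m-γ) * (2 * Pq.eval t * (Polynomial.derivative Pq).eval t)) t := by
    intro t ht
    have ht2 : (0:ℝ) < 1 - t^2 := one_sub_sq_pos ht.1 ht.2
    have h1' : HasDerivAt (fun u : ℝ => 1 - u^2) (-(2*t)) t := by
      simpa using ((hasDerivAt_pow 2 t).const_sub 1)
    have hsq : HasDerivAt (fun u : ℝ => (Pq.eval u)^2)
        (2 * Pq.eval t * (Polynomial.derivative Pq).eval t) t := by
      have := (Pq.hasDerivAt t).pow 2
      simp at this
      exact this
    exact (h1'.rpow_const (Or.inl (ne_of_gt ht2))).mul hsq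
  have hWanti : AntitoneOn (fun u : ℝ => (1-u^2)^(m-γ) * (Pq.eval u)^2) (Set.Icc xs x) := by
    apply antitoneOn_of_deriv_nonpos (convex_Icc _ _)
    · intro t ht
      have ht' : t ∈ Set.Ioo (-1:ℝ) 1 := ⟨by linarith [ht.1], by linarith [ht.2]⟩
      exact (hWd t ht').continuousAt.continuousWithinAt
    · rw [interior_Icc]
      intro t ht
      have ht' : t ∈ Set.Ioo (-1:ℝ) 1 := ⟨by linarith [ht.1], by linarith [ht.2]⟩
      exact (hWd t ht').differentiableAt.differentiableWithinAt
    · rw [interior_Icc]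
      intro t ht
      have ht' : t ∈ Set.Ioo (-1:ℝ) 1 := ⟨by linarith [ht.1], by linarith [ht.2]⟩
      have ht2 : (0:ℝ) < 1 - t^2 := one_sub_sq_pos ht'.1 ht'.2
      rw [(hWd t ht').deriv]
      have hsplit : (1-t^2)^(m-γ) = (1-t^2)^(m-γ-1)*(1-t^2) := by
        rw [← Real.rpow_add_one (ne_of_gt ht2)]; ring_nf
      rw [hsplit]
      have he : (-(2*t)) * (m-γ) * (1-t^2)^(m-γ-1) * (Pq.eval t)^2
          + (1-t^2)^(m-γ-1)*(1-t^2) * (2 * Pq.eval t * (Polynomial.derivative Pq).eval t)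
          = (2*(1-t^2)^(m-γ-1)) * Hp.eval t := by
        rw [hHeval t]; ring
      rw [he]
      exact mul_nonpos_iff.mpr (Or.inl ⟨by positivity, hh t ht.1.le ht.2.le⟩)
  have hW := hWanti (Set.mem_Icc.mpr ⟨le_refl xs, h2.le⟩)
    (Set.mem_Icc.mpr ⟨h2.le, le_refl x⟩) h2.le
  have hW' : (1-x^2)^(m-γ) * (Pq.eval x)^2 ≤ (1-xs^2)^(m-γ) * (Pq.eval xs)^2 := by
    simpa using hW
  have hAx : (0:ℝ) < 1 - x^2 := one_sub_sq_pos (by linarith) hx1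
  have hBx : (0:ℝ) < 1 - xs^2 := one_sub_sq_pos (by linarith) hxs1
  have hAlt1 : 1 - x^2 ≤ 1 := by linarith [sq_nonneg x]
  have hYx : Yfun ℓ m x = κ * (1-x^2)^(m/2) * Pq.eval x := hY x ⟨by linarith, hx1⟩
  have hYxs : Yfun ℓ m xs = κ * (1-xs^2)^(m/2) * Pq.eval xs := hY xs ⟨by linarith, hxs1⟩
  have hsplitA : (1-x^2)^(m/2) * (1-x^2)^(m/2) = (1-x^2)^(m:ℝ) := by
    rw [← Real.rpow_add hAx]; ring_nf
  have hsplitB : (1-xs^2)^(m/2) * (1-xs^2)^(m/2) = (1-xs^2)^(m:ℝ) := by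
    rw [← Real.rpow_add hBx]; ring_nf
  have hYx2 : (Yfun ℓ m x)^2 = κ^2 * ((1-x^2)^(m:ℝ) * (Pq.eval x)^2) := by
    rw [hYx, ← hsplitA]; ring
  have hYxs2 : (Yfun ℓ m xs)^2 = κ^2 * ((1-xs^2)^(m:ℝ) * (Pq.eval xs)^2) := by
    rw [hYxs, ← hsplitB]; ring
  have hAm : (1-x^2)^(m:ℝ) = (1-x^2)^γ * (1-x^2)^(m-γ) := by
    rw [← Real.rpow_add hAx]; ring_nf
  have hBm : (1-xs^2)^(m-γ) = (1-xs^2)^(m:ℝ) * ((1-xs^2)^γ)⁻¹ := by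
    rw [← Real.rpow_neg hBx.le, ← Real.rpow_add hBx]; ring_nf
  have hT : (1-x^2)^γ * ((1-xs^2)^γ)⁻¹ ≤ (1-x^2)^(δ*c) := by
    rcases le_or_gt c 0 with hc0 | hc0
    · have hγeq : γ = 0 := by rw [hγ_def, max_eq_right hc0]
      rw [hγeq]
      simp only [Real.rpow_zero, inv_one, mul_one]
      have hδc : δ*c ≤ 0 := mul_nonpos_iff.mpr (Or.inl ⟨hδ0.le, hc0⟩)
      have h9 := Real.rpow_le_rpow_of_exponent_ge hAx hAlt1 hδc
      rwa [Real.rpow_zero] at h9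
    · have hγeq : γ = c := by rw [hγ_def, max_eq_left hc0.le]
      rw [hγeq]
      have hBer : (1-x^2)^((1:ℝ)-δ) ≤ 1 - (1-δ)*x^2 := by
        have h9 := rpow_one_add_le_one_add_mul_self (s := -x^2) (p := 1-δ)
          (by linarith [sq_nonneg x, hAx]) (by linarith) (by linarith)
        have e1 : (1:ℝ) + -x^2 = 1 - x^2 := by ring
        rw [e1] at h9
        linarith [h9]
      have hxs2 : xs^2 ≤ (1-δ)*x^2 := by
        rw [inv_mul_le_iff₀ (by linarith : (0:ℝ) < 1-δ)] at h3
        linarith [h3]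
      have hstep : (1-x^2)^((1:ℝ)-δ) ≤ 1 - xs^2 := by linarith
      have hpow : (1-x^2)^((1-δ)*c) ≤ (1-xs^2)^c := by
        rw [Real.rpow_mul hAx.le]
        exact Real.rpow_le_rpow (Real.rpow_nonneg hAx.le _) hstep hc0.le
      have hsplitc : (1-x^2)^c = (1-x^2)^(δ*c) * (1-x^2)^((1-δ)*c) := by
        rw [← Real.rpow_add hAx]; ring_nf
      have hBc : 0 < (1-xs^2)^c := Real.rpow_pos_of_pos hBx c
      rw [mul_inv_le_iff₀ hBc, hsplitc]
      exact mul_le_mul_of_nonneg_left hpow (Real.rpow_nonneg hAx.le _)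
  have hchain : (Yfun ℓ m x)^2 ≤ (Yfun ℓ m xs)^2 * (1-x^2)^(δ*c) := by
    calc (Yfun ℓ m x)^2
        = (κ^2 * (1-x^2)^γ) * ((1-x^2)^(m-γ) * (Pq.eval x)^2) := by rw [hYx2, hAm]; ring
      _ ≤ (κ^2 * (1-x^2)^γ) * ((1-xs^2)^(m-γ) * (Pq.eval xs)^2) := by
          apply mul_le_mul_of_nonneg_left hW'
          positivity
      _ = (κ^2 * ((1-xs^2)^(m:ℝ) * (Pq.eval xs)^2)) * ((1-x^2)^γ * ((1-xs^2)^γ)⁻¹) := by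
          rw [hBm]; ring
      _ ≤ (κ^2 * ((1-xs^2)^(m:ℝ) * (Pq.eval xs)^2)) * (1-x^2)^(δ*c) := by
          apply mul_le_mul_of_nonneg_left hT
          positivity
      _ = (Yfun ℓ m xs)^2 * (1-x^2)^(δ*c) := by rw [hYxs2]
  have hexp : δ * (η * Real.sqrt (ℓ^2 - 1/4) - 1) / 2 = δ*c/2 := by rw [hc_def, hs_def]
  rw [hexp]
  have hE : (1-x^2)^(δ*c/2) * (1-x^2)^(δ*c/2) = (1-x^2)^(δ*c) := by
    rw [← Real.rpow_add hAx]; ring_nf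
  have hrhs0 : 0 ≤ |Yfun ℓ m xs| * (1-x^2)^(δ*c/2) := by positivity
  have hsqle : |Yfun ℓ m x|^2 ≤ (|Yfun ℓ m xs| * (1-x^2)^(δ*c/2))^2 := by
    have e2 : (|Yfun ℓ m xs| * (1-x^2)^(δ*c/2))^2 = (Yfun ℓ m xs)^2 * (1-x^2)^(δ*c) := by
      rw [mul_pow, sq_abs, ← hE]; ring
    rw [sq_abs, e2]
    exact hchain
  calc |Yfun ℓ m x| = Real.sqrt (|Yfun ℓ m x|^2) := (Real.sqrt_sq (abs_nonneg _)).symm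
    _ ≤ Real.sqrt ((|Yfun ℓ m xs| * (1-x^2)^(δ*c/2))^2) := Real.sqrt_le_sqrt hsqle
    _ = |Yfun ℓ m xs| * (1-x^2)^(δ*c/2) := Real.sqrt_sq hrhs0
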